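/- Fix α > −1, a positive integer w, and positive integers m₀,…,m_{w−1}. Then the falling-factorial-type sequence {Π_{k=0}^{w−1}(n−k)^{m_k}}_{n=0}^∞ is a complex zero decreasing sequence for the generalized Laguerre basis L^{(α)}: if p = Σ a_n L_n^{(α)}, then Z_C(Σ Π_{k<w}(n−k)^{m_k} a_n L_n^{(α)}) ≤ Z_C(p). -/

import Mathlib

open Polynomial Finset

open scoped Classical in
/-- Number of non-real complex zeros of a real polynomial, counted with multiplicity. -/
noncomputable def ZC (p : Polynomial ℝ) : ℕ :=
  (((p.map (algebraMap ℝ ℂ)).roots).filter (fun z => z.im ≠ 0)).card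

/-- Number of real zeros of a real polynomial, counted with multiplicity. -/
noncomputable def ZR (p : Polynomial ℝ) : ℕ := p.roots.card

open Real Set Filter Topology


noncomputable def Bop (β : ℝ) (q : Polynomial ℝ) : Polynomial ℝ :=
  -X * derivative q + (X - C (β + 1)) * q

noncomputable def hfun (β : ℝ) (q : Polynomial ℝ) (x : ℝ) : ℝ :=
  |x| ^ (β + 1) * Real.exp (-x) * q.eval x

noncomputable def gfun (β : ℝ) (q : Polynomial ℝ) (x : ℝ) : ℝ :=
  (if 0 < x then -(x ^ β) else (-x) ^ β) * Real.exp (-x) * (Bop β q).eval x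

lemma hfun_cont (β : ℝ) (hβ : -1 < β) (q : Polynomial ℝ) : Continuous (hfun β q) := by
  have h1 : Continuous fun x : ℝ => |x| ^ (β + 1) :=
    (Real.continuous_rpow_const (by linarith)).comp continuous_abs
  exact (h1.mul (Real.continuous_exp.comp continuous_neg)).mul q.continuous_aeval

lemma eval_Bop (β : ℝ) (q : Polynomial ℝ) (x : ℝ) :
    (Bop β q).eval x = -x * (derivative q).eval x + (x - (β + 1)) * q.eval x := by
  simp [Bop]

lemma hfun_hasDerivAt_pos (β : ℝ) (q : Polynomial ℝ) {x : ℝ} (hx : 0 < x) :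
    HasDerivAt (hfun β q) (gfun β q x) x := by
  have hne : x ≠ 0 := ne_of_gt hx
  have f1 : HasDerivAt (fun y : ℝ => y ^ (β + 1)) ((β + 1) * x ^ (β + 1 - 1)) x :=
    Real.hasDerivAt_rpow_const (Or.inl hne)
  have f2 : HasDerivAt (fun y : ℝ => Real.exp (-y)) (-Real.exp (-x)) x := by
    simpa [Function.comp_def] using (Real.hasDerivAt_exp (-x)).comp x ((hasDerivAt_id x).neg)
  have f3 : HasDerivAt (fun y : ℝ => q.eval y) ((derivative q).eval x) x := q.hasDerivAt x
  have fmul := (f1.mul f2).mul f3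
  have heq : hfun β q =ᶠ[𝓝 x] fun y => y ^ (β + 1) * Real.exp (-y) * q.eval y := by
    filter_upwards [lt_mem_nhds hx] with y hy
    rw [hfun, abs_of_pos hy]
  refine HasDerivAt.congr_of_eventuallyEq ?_ heq
  convert fmul using 1
  · rfl
  · rfl
  simp only [Pi.mul_apply]
  have e1 : x ^ (β + 1 - 1) = x ^ β := by norm_num
  have e2 : x ^ (β + 1) = x ^ β * x := by
    rw [Real.rpow_add hx, Real.rpow_one]
  rw [gfun, if_pos hx, eval_Bop, e1, e2]
  ring

lemma hfun_hasDerivAt_neg (β : ℝ) (q : Polynomial ℝ) {x : ℝ} (hx : x < 0) :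
    HasDerivAt (hfun β q) (gfun β q x) x := by
  have hne : -x ≠ 0 := by intro h; rw [neg_eq_zero] at h; exact absurd h (ne_of_lt hx)
  have f0 : HasDerivAt (fun z : ℝ => z ^ (β + 1)) ((β + 1) * (-x) ^ (β + 1 - 1)) (-x) :=
    Real.hasDerivAt_rpow_const (Or.inl hne)
  have f1 : HasDerivAt (fun y : ℝ => (-y) ^ (β + 1))
      ((β + 1) * (-x) ^ (β + 1 - 1) * (-1)) x := f0.comp x ((hasDerivAt_id x).neg)
  have f2 : HasDerivAt (fun y : ℝ => Real.exp (-y)) (-Real.exp (-x)) x := by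
    simpa [Function.comp_def] using (Real.hasDerivAt_exp (-x)).comp x ((hasDerivAt_id x).neg)
  have f3 : HasDerivAt (fun y : ℝ => q.eval y) ((derivative q).eval x) x := q.hasDerivAt x
  have fmul := (f1.mul f2).mul f3
  have heq : hfun β q =ᶠ[𝓝 x] fun y => (-y) ^ (β + 1) * Real.exp (-y) * q.eval y := by
    filter_upwards [gt_mem_nhds hx] with y hy
    rw [hfun, abs_of_neg hy]
  refine HasDerivAt.congr_of_eventuallyEq ?_ heq
  convert fmul using 1
  · rfl
  · rfl
  simp only [Pi.mul_apply]
  have hpos : 0 < -x := by linarith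
  have e1 : (-x) ^ (β + 1 - 1) = (-x) ^ β := by norm_num
  have e2 : (-x) ^ (β + 1) = (-x) ^ β * (-x) := by
    rw [Real.rpow_add hpos, Real.rpow_one]
  rw [gfun, if_neg (by linarith), eval_Bop, e1, e2]
  ring

lemma gfun_zero_root (β : ℝ) (q : Polynomial ℝ) {x : ℝ} (hx : x ≠ 0)
    (h : gfun β q x = 0) : (Bop β q).eval x = 0 := by
  rw [gfun] at h
  rcases mul_eq_zero.mp h with h' | h'
  · exfalso
    rcases mul_eq_zero.mp h' with h'' | h''
    · rcases lt_or_gt_of_ne hx with hneg | hpos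
      · rw [if_neg (by linarith)] at h''
        exact absurd h'' (ne_of_gt (Real.rpow_pos_of_pos (by linarith) β))
      · rw [if_pos hpos] at h''
        exact absurd h'' (by simpa using ne_of_gt (Real.rpow_pos_of_pos hpos β))
    · exact absurd h'' (Real.exp_ne_zero _)
  · exact h'

lemma hfun_zero_at_zero (β : ℝ) (hβ : -1 < β) (q : Polynomial ℝ) : hfun β q 0 = 0 := by
  rw [hfun]
  simp [Real.zero_rpow (by linarith : β + 1 ≠ 0)]

lemma hfun_zero_at_root (β : ℝ) (q : Polynomial ℝ) {t : ℝ} (ht : q.eval t = 0) :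
    hfun β q t = 0 := by rw [hfun, ht, mul_zero]

lemma hfun_tendsto_atTop (β : ℝ) (q : Polynomial ℝ) :
    Tendsto (hfun β q) atTop (𝓝 0) := by
  have key : ∀ i : ℕ, Tendsto (fun x : ℝ => x ^ (β + 1 + i) * Real.exp (-x)) atTop (𝓝 0) := by
    intro i
    have := tendsto_rpow_mul_exp_neg_mul_atTop_nhds_zero (β + 1 + i) 1 one_pos
    simpa using this
  have sum : Tendsto (fun x : ℝ => ∑ i ∈ Finset.range (q.natDegree + 1),
      q.coeff i * (x ^ (β + 1 + i) * Real.exp (-x))) atTop (𝓝 0) := by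
    have := tendsto_finset_sum (Finset.range (q.natDegree + 1))
      (fun i _ => ((key i).const_mul (q.coeff i)))
    simpa using this
  refine sum.congr' ?_
  filter_upwards [eventually_gt_atTop (0:ℝ)] with x hx
  rw [hfun, abs_of_pos hx, Polynomial.eval_eq_sum_range, Finset.mul_sum]
  refine Finset.sum_congr rfl fun i _ => ?_
  have : x ^ (β + 1 + i) = x ^ (β + 1) * x ^ (i : ℕ) := by
    rw [Real.rpow_add hx, Real.rpow_natCast]
  rw [this]
  ring

lemma gap1 (β : ℝ) (hβ : -1 < β) (q : Polynomial ℝ) {a b : ℝ} (hab : a < b)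
    (hside : 0 ≤ a ∨ b ≤ 0) (ha : hfun β q a = 0) (hb : hfun β q b = 0) :
    ∃ c ∈ Ioo a b, (Bop β q).eval c = 0 := by
  have hderiv : ∀ x ∈ Ioo a b, HasDerivAt (hfun β q) (gfun β q x) x := by
    intro x hx
    rcases hside with h | h
    · exact hfun_hasDerivAt_pos β q (lt_of_le_of_lt h hx.1)
    · exact hfun_hasDerivAt_neg β q (lt_of_lt_of_le hx.2 h)
  obtain ⟨c, hc, hgc⟩ := exists_hasDerivAt_eq_zero hab
    ((hfun_cont β hβ q).continuousOn) (ha.trans hb.symm) hderiv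
  refine ⟨c, hc, gfun_zero_root β q ?_ hgc⟩
  rcases hside with h | h
  · exact ne_of_gt (lt_of_le_of_lt h hc.1)
  · exact ne_of_lt (lt_of_lt_of_le hc.2 h)

lemma gap2 (β : ℝ) (hβ : -1 < β) (q : Polynomial ℝ) (hq : q ≠ 0) {a : ℝ} (ha0 : 0 ≤ a)
    (ha : hfun β q a = 0) : ∃ c, a < c ∧ (Bop β q).eval c = 0 := by
  -- pick x₀ > a with q.eval x₀ ≠ 0
  obtain ⟨x₀, hx₀a, hx₀⟩ : ∃ x₀, a < x₀ ∧ q.eval x₀ ≠ 0 := by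
    have hfin : {x : ℝ | q.IsRoot x}.Finite := Polynomial.finite_setOf_isRoot hq
    have : (Ioi a \ {x : ℝ | q.IsRoot x}).Nonempty := by
      rcases Set.eq_empty_or_nonempty (Ioi a \ {x : ℝ | q.IsRoot x}) with h | h
      · exfalso
        have hsub : Ioi a ⊆ {x : ℝ | q.IsRoot x} := fun x hx => by
          by_contra hxx
          exact Set.eq_empty_iff_forall_notMem.mp h x ⟨hx, hxx⟩
        exact (Set.Infinite.mono hsub (Set.Ioi_infinite a)) hfin
      · exact h
    obtain ⟨x₀, hx₀⟩ := this
    exact ⟨x₀, hx₀.1, hx₀.2⟩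
  have hhx₀ : hfun β q x₀ ≠ 0 := by
    rw [hfun]
    have h1 : |x₀| ^ (β + 1) ≠ 0 :=
      ne_of_gt (Real.rpow_pos_of_pos (abs_pos.mpr (by intro h; rw [h] at hx₀a; linarith)) _)
    exact mul_ne_zero (mul_ne_zero h1 (Real.exp_ne_zero _)) hx₀
  -- pick b with |h b| < |h x₀|
  obtain ⟨b, hbx₀, hb⟩ : ∃ b, x₀ < b ∧ |hfun β q b| < |hfun β q x₀| := by
    have := (hfun_tendsto_atTop β q).abs
    rw [show |(0:ℝ)| = 0 by simp] at this
    have hev := this.eventually_lt_const (abs_pos.mpr hhx₀)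
    obtain ⟨b, hb1, hb2⟩ := ((hev.and (eventually_gt_atTop x₀)).exists)
    exact ⟨b, hb2, hb1⟩
  have hab : a < b := lt_trans hx₀a hbx₀
  have hcompact := isCompact_Icc (a := a) (b := b)
  have hcont := (hfun_cont β hβ q).continuousOn (s := Icc a b)
  have hne : (Icc a b).Nonempty := ⟨a, by constructor <;> [exact le_refl a; exact le_of_lt hab]⟩
  rcases lt_or_gt_of_ne hhx₀ with hneg | hpos
  · -- minimum
    obtain ⟨c, hcmem, hcmin⟩ := hcompact.exists_isMinOn hne hcont
    have hcx₀ : hfun β q c ≤ hfun β q x₀ := hcmin ⟨le_of_lt hx₀a, le_of_lt hbx₀⟩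
    have hca : c ≠ a := fun h => by rw [h, ha] at hcx₀; linarith
    have hcb : c ≠ b := fun h => by
      rw [h] at hcx₀
      have : -|hfun β q b| ≤ hfun β q b := neg_abs_le _
      have h2 : |hfun β q x₀| = -(hfun β q x₀) := abs_of_neg hneg
      linarith
    have hcIoo : c ∈ Ioo a b :=
      ⟨lt_of_le_of_ne hcmem.1 (Ne.symm hca), lt_of_le_of_ne hcmem.2 hcb⟩
    have hlocal : IsLocalMin (hfun β q) c :=
      hcmin.isLocalMin (Icc_mem_nhds hcIoo.1 hcIoo.2)
    have hcpos : 0 < c := lt_of_le_of_lt ha0 hcIoo.1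
    have := hlocal.hasDerivAt_eq_zero (hfun_hasDerivAt_pos β q hcpos)
    exact ⟨c, hcIoo.1, gfun_zero_root β q (ne_of_gt hcpos) this⟩
  · -- maximum
    obtain ⟨c, hcmem, hcmax⟩ := hcompact.exists_isMaxOn hne hcont
    have hcx₀ : hfun β q x₀ ≤ hfun β q c := hcmax ⟨le_of_lt hx₀a, le_of_lt hbx₀⟩
    have hca : c ≠ a := fun h => by rw [h, ha] at hcx₀; linarith
    have hcb : c ≠ b := fun h => by
      rw [h] at hcx₀
      have : hfun β q b ≤ |hfun β q b| := le_abs_self _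
      have h2 : |hfun β q x₀| = hfun β q x₀ := abs_of_pos hpos
      linarith
    have hcIoo : c ∈ Ioo a b :=
      ⟨lt_of_le_of_ne hcmem.1 (Ne.symm hca), lt_of_le_of_ne hcmem.2 hcb⟩
    have hlocal : IsLocalMax (hfun β q) c :=
      hcmax.isLocalMax (Icc_mem_nhds hcIoo.1 hcIoo.2)
    have hcpos : 0 < c := lt_of_le_of_lt ha0 hcIoo.1
    have := hlocal.hasDerivAt_eq_zero (hfun_hasDerivAt_pos β q hcpos)
    exact ⟨c, hcIoo.1, gfun_zero_root β q (ne_of_gt hcpos) this⟩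

lemma Bop_coeff_top (β : ℝ) (q : Polynomial ℝ) :
    (Bop β q).coeff (q.natDegree + 1) = q.leadingCoeff := by
  unfold Bop
  rw [coeff_add]
  have h1 : (-X * derivative q).coeff (q.natDegree + 1) = 0 := by
    rw [neg_mul, coeff_neg, coeff_X_mul]
    rcases eq_or_ne (derivative q) 0 with h | h
    · simp [h]
    · rw [coeff_eq_zero_of_natDegree_lt, neg_zero]
      have h4 := natDegree_derivative_lt (p := q) (fun h0 => h (by
        obtain ⟨c, rfl⟩ := natDegree_eq_zero.mp h0; simp))
      omega
  have h2 : ((X - C (β + 1)) * q).coeff (q.natDegree + 1) = q.leadingCoeff := by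
    rw [sub_mul, coeff_sub, coeff_X_mul, coeff_C_mul,
      coeff_eq_zero_of_natDegree_lt (Nat.lt_succ_self _), mul_zero, sub_zero, coeff_natDegree]
  rw [h1, h2, zero_add]

lemma Bop_natDegree_le (β : ℝ) (q : Polynomial ℝ) :
    (Bop β q).natDegree ≤ q.natDegree + 1 := by
  unfold Bop
  refine natDegree_add_le_of_degree_le ?_ ?_
  · refine (natDegree_mul_le).trans ?_
    have := natDegree_derivative_le q
    simp only [natDegree_neg, natDegree_X]
    omega
  · refine (natDegree_mul_le).trans ?_
    have : (X - C (β + 1) : Polynomial ℝ).natDegree ≤ 1 := natDegree_X_sub_C_le _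
    omega

lemma Bop_ne_zero (β : ℝ) (q : Polynomial ℝ) (hq : q ≠ 0) : Bop β q ≠ 0 := fun h => by
  have := Bop_coeff_top β q
  rw [h, coeff_zero] at this
  exact leadingCoeff_ne_zero.mpr hq this.symm

lemma Bop_natDegree (β : ℝ) (q : Polynomial ℝ) (hq : q ≠ 0) :
    (Bop β q).natDegree = q.natDegree + 1 := by
  refine le_antisymm (Bop_natDegree_le β q) ?_
  exact le_natDegree_of_ne_zero (Bop_coeff_top β q ▸ leadingCoeff_ne_zero.mpr hq)

lemma Bop_mult (β : ℝ) (q : Polynomial ℝ) (hq : q ≠ 0) (r : ℝ) :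
    q.rootMultiplicity r - 1 ≤ (Bop β q).rootMultiplicity r := by
  rw [le_rootMultiplicity_iff (Bop_ne_zero β q hq)]
  have hd : (X - C r) ^ (q.rootMultiplicity r - 1) ∣ derivative q :=
    dvd_trans (pow_dvd_pow _ (rootMultiplicity_sub_one_le_derivative_rootMultiplicity q r))
      (pow_rootMultiplicity_dvd (derivative q) r)
  have hq' : (X - C r) ^ (q.rootMultiplicity r - 1) ∣ q :=
    dvd_trans (pow_dvd_pow _ (Nat.sub_le _ _)) (pow_rootMultiplicity_dvd q r)
  exact dvd_add (Dvd.dvd.mul_left hd _) (Dvd.dvd.mul_left hq' _)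

lemma Bop_mult_zero (β : ℝ) (q : Polynomial ℝ) (hq : q ≠ 0) :
    q.rootMultiplicity 0 ≤ (Bop β q).rootMultiplicity 0 := by
  rw [le_rootMultiplicity_iff (Bop_ne_zero β q hq)]
  set m := q.rootMultiplicity 0 with hm
  have hq2 : (X - C 0) ^ m ∣ q := pow_rootMultiplicity_dvd q 0
  unfold Bop
  rcases Nat.eq_zero_or_pos m with h0 | h0
  · simp [h0]
  refine dvd_add ?_ (Dvd.dvd.mul_left hq2 _)
  have hd : (X - C 0) ^ (m - 1) ∣ derivative q :=
    dvd_trans (pow_dvd_pow _ (rootMultiplicity_sub_one_le_derivative_rootMultiplicity q 0))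
      (pow_rootMultiplicity_dvd (derivative q) 0)
  rw [map_zero, sub_zero] at hd ⊢
  have hsplit : (X : Polynomial ℝ) ^ m = X * X ^ (m - 1) := by
    conv_lhs => rw [show m = 1 + (m - 1) by omega]
    rw [pow_add, pow_one]
  rw [hsplit, neg_mul, dvd_neg]
  exact mul_dvd_mul (dvd_refl X) hd

lemma sum_count_le (M : Multiset ℝ) (E : Finset ℝ) :
    (∑ x ∈ E, M.count x) ≤ Multiset.card M := by
  classical
  have h1 : (∑ x ∈ E, M.count x) = ∑ x ∈ E ∩ M.toFinset, M.count x := by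
    refine (Finset.sum_subset Finset.inter_subset_left ?_).symm
    intro x hx hnx
    rw [Multiset.count_eq_zero]
    intro hmem
    exact hnx (Finset.mem_inter.mpr ⟨hx, Multiset.mem_toFinset.mpr hmem⟩)
  rw [h1, ← Multiset.toFinset_sum_count_eq M]
  exact Finset.sum_le_sum_of_subset Finset.inter_subset_right

lemma key_gap (β : ℝ) (hβ : -1 < β) (q : Polynomial ℝ) (hq : q ≠ 0) :
    ∀ t ∈ insert (0:ℝ) q.roots.toFinset, ∃ c, t < c ∧
      (∀ s ∈ insert (0:ℝ) q.roots.toFinset, s ≤ t ∨ c < s) ∧ (Bop β q).eval c = 0 := by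
  classical
  intro t ht
  set T := insert (0:ℝ) q.roots.toFinset with hTdef
  have hhfunT : ∀ s ∈ T, hfun β q s = 0 := by
    intro s hs
    rcases Finset.mem_insert.mp hs with h | h
    · rw [h]; exact hfun_zero_at_zero β hβ q
    · exact hfun_zero_at_root β q ((Polynomial.mem_roots hq).mp (Multiset.mem_toFinset.mp h))
  by_cases hfil : (T.filter (fun s => t < s)).Nonempty
  · set t' := (T.filter (fun s => t < s)).min' hfil with ht'def
    have ht'mem := (T.filter (fun s => t < s)).min'_mem hfil
    rw [Finset.mem_filter] at ht'mem
    have htt' : t < t' := ht'mem.2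
    have hside : 0 ≤ t ∨ t' ≤ 0 := by
      rcases le_or_gt 0 t with h | h
      · exact Or.inl h
      · refine Or.inr (Finset.min'_le _ _ ?_)
        exact Finset.mem_filter.mpr ⟨Finset.mem_insert_self _ _, h⟩
    obtain ⟨c, hc, hcroot⟩ := gap1 β hβ q htt' hside (hhfunT t ht) (hhfunT t' ht'mem.1)
    refine ⟨c, hc.1, ?_, hcroot⟩
    intro s hs
    rcases le_or_gt s t with h | h
    · exact Or.inl h
    · refine Or.inr (lt_of_lt_of_le hc.2 ?_)
      exact Finset.min'_le _ _ (Finset.mem_filter.mpr ⟨hs, h⟩)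
  · have hmax : ∀ s ∈ T, s ≤ t := by
      intro s hs
      by_contra h
      exact hfil ⟨s, Finset.mem_filter.mpr ⟨hs, lt_of_not_ge h⟩⟩
    have ht0 : 0 ≤ t := hmax 0 (Finset.mem_insert_self _ _)
    obtain ⟨c, hc, hcroot⟩ := gap2 β hβ q hq ht0 (hhfunT t ht)
    exact ⟨c, hc, fun s hs => Or.inl (hmax s hs), hcroot⟩

lemma ZR_Bop (β : ℝ) (hβ : -1 < β) (q : Polynomial ℝ) (hq : q ≠ 0) :
    Multiset.card q.roots + 1 ≤ Multiset.card (Bop β q).roots := by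
  classical
  set T := insert (0:ℝ) q.roots.toFinset with hTdef
  set P := Bop β q with hPdef
  have hP : P ≠ 0 := Bop_ne_zero β q hq
  choose! f hf1 hf2 hf3 using key_gap β hβ q hq
  set G := T.image f with hGdef
  have hinj : Set.InjOn f T := by
    intro t₁ h₁ t₂ h₂ heq
    by_contra hne
    rcases lt_or_gt_of_ne hne with h | h
    · rcases hf2 t₁ h₁ t₂ h₂ with h' | h'
      · linarith
      · have := hf1 t₂ h₂; linarith
    · rcases hf2 t₂ h₂ t₁ h₁ with h' | h'
      · linarith
      · have := hf1 t₁ h₁; linarith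
  have hGcard : G.card = T.card := Finset.card_image_of_injOn hinj
  have hGroot : ∀ x ∈ G, P.eval x = 0 := by
    intro x hx
    obtain ⟨t, ht, rfl⟩ := Finset.mem_image.mp hx
    exact hf3 t ht
  have hGdisj : Disjoint G q.roots.toFinset := by
    rw [Finset.disjoint_left]
    intro x hx hxT
    obtain ⟨t, ht, rfl⟩ := Finset.mem_image.mp hx
    have hxT' : f t ∈ T := Finset.mem_insert_of_mem hxT
    rcases hf2 t ht (f t) hxT' with h | h
    · have := hf1 t ht; linarith
    · linarith
  -- now the counting
  have hsum : (∑ x ∈ q.roots.toFinset ∪ G, P.roots.count x) ≤ Multiset.card P.roots :=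
    sum_count_le _ _
  rw [Finset.sum_union hGdisj.symm] at hsum
  have hGbound : G.card ≤ ∑ x ∈ G, P.roots.count x := by
    rw [Finset.card_eq_sum_ones]
    refine Finset.sum_le_sum fun x hx => ?_
    rw [Polynomial.count_roots]
    exact (Polynomial.rootMultiplicity_pos hP).mpr (hGroot x hx)
  -- bound on the roots part
  by_cases h0 : (0:ℝ) ∈ q.roots.toFinset
  · have hTcard : T.card = q.roots.toFinset.card := by
      rw [hTdef, Finset.card_insert_of_mem h0]
    have hsplit : P.roots.count 0 + ∑ x ∈ q.roots.toFinset.erase 0, P.roots.count x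
        = ∑ x ∈ q.roots.toFinset, P.roots.count x :=
      Finset.add_sum_erase q.roots.toFinset (fun x => P.roots.count x) h0
    have hsplitq : q.roots.count 0 + ∑ x ∈ q.roots.toFinset.erase 0, q.roots.count x
        = ∑ x ∈ q.roots.toFinset, q.roots.count x :=
      Finset.add_sum_erase q.roots.toFinset (fun x => q.roots.count x) h0
    have hzero : q.roots.count 0 ≤ P.roots.count 0 := by
      rw [Polynomial.count_roots, Polynomial.count_roots]
      exact Bop_mult_zero β q hq
    have herase : ∑ x ∈ q.roots.toFinset.erase 0, q.roots.count x
        ≤ (∑ x ∈ q.roots.toFinset.erase 0, P.roots.count x) + (q.roots.toFinset.card - 1) := by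
      have h1 : ∀ x ∈ q.roots.toFinset.erase 0, q.roots.count x ≤ P.roots.count x + 1 := by
        intro x hx
        rw [Polynomial.count_roots, Polynomial.count_roots]
        have := Bop_mult β q hq x
        rw [← hPdef] at this
        omega
      calc ∑ x ∈ q.roots.toFinset.erase 0, q.roots.count x
          ≤ ∑ x ∈ q.roots.toFinset.erase 0, (P.roots.count x + 1) := Finset.sum_le_sum h1
        _ = (∑ x ∈ q.roots.toFinset.erase 0, P.roots.count x)
              + (q.roots.toFinset.erase 0).card := by rw [Finset.sum_add_distrib]; simp
        _ = (∑ x ∈ q.roots.toFinset.erase 0, P.roots.count x)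
              + (q.roots.toFinset.card - 1) := by rw [Finset.card_erase_of_mem h0]
    have hq_eq : Multiset.card q.roots = ∑ x ∈ q.roots.toFinset, q.roots.count x :=
      (Multiset.toFinset_sum_count_eq _).symm
    have hcard_pos : 1 ≤ q.roots.toFinset.card := Finset.card_pos.mpr ⟨0, h0⟩
    omega
  · have hTcard : T.card = q.roots.toFinset.card + 1 := by
      rw [hTdef, Finset.card_insert_of_notMem h0]
    have hbound : ∑ x ∈ q.roots.toFinset, q.roots.count x
        ≤ (∑ x ∈ q.roots.toFinset, P.roots.count x) + q.roots.toFinset.card := by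
      have h1 : ∀ x ∈ q.roots.toFinset, q.roots.count x ≤ P.roots.count x + 1 := by
        intro x hx
        rw [Polynomial.count_roots, Polynomial.count_roots]
        have := Bop_mult β q hq x
        rw [← hPdef] at this
        omega
      calc ∑ x ∈ q.roots.toFinset, q.roots.count x
          ≤ ∑ x ∈ q.roots.toFinset, (P.roots.count x + 1) := Finset.sum_le_sum h1
        _ = _ := by rw [Finset.sum_add_distrib]; simp
    have hq_eq : Multiset.card q.roots = ∑ x ∈ q.roots.toFinset, q.roots.count x :=
      (Multiset.toFinset_sum_count_eq _).symm
    omega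


open scoped Classical

lemma roots_map_filter (p : Polynomial ℝ) (hp : p ≠ 0) :
    ((p.map (algebraMap ℝ ℂ)).roots).filter (fun z => ¬ z.im ≠ 0)
      = p.roots.map (algebraMap ℝ ℂ) := by
  have hinj : Function.Injective (algebraMap ℝ ℂ) := (algebraMap ℝ ℂ).injective
  ext z
  rw [Multiset.count_filter]
  by_cases hz : z.im = 0
  · simp only [hz, ne_eq, not_true_eq_false, not_false_eq_true, if_true]
    have hzr : z = (algebraMap ℝ ℂ) z.re := by
      apply Complex.ext <;> simp [hz]
    rw [hzr, Multiset.count_map_eq_count' _ _ hinj, count_roots, count_roots,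
      ← eq_rootMultiplicity_map hinj z.re]
  · simp only [hz, ne_eq, not_false_eq_true, not_true_eq_false, if_false]
    symm
    rw [Multiset.count_eq_zero]
    intro hmem
    obtain ⟨x, _, rfl⟩ := Multiset.mem_map.mp hmem
    simp at hz

lemma ZC_eq (p : Polynomial ℝ) (hp : p ≠ 0) : ZC p = p.natDegree - ZR p := by
  classical
  have hinj : Function.Injective (algebraMap ℝ ℂ) := (algebraMap ℝ ℂ).injective
  have hsplit : Multiset.card (p.map (algebraMap ℝ ℂ)).roots = p.natDegree :=
    by rw [← (IsAlgClosed.splits (p.map (algebraMap ℝ ℂ))).natDegree_eq_card_roots, natDegree_map]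
  have hpart := Multiset.filter_add_not (fun z => z.im ≠ 0) (p.map (algebraMap ℝ ℂ)).roots
  have hcard := congrArg Multiset.card hpart
  rw [Multiset.card_add, hsplit] at hcard
  have hreal : Multiset.card (((p.map (algebraMap ℝ ℂ)).roots).filter
      (fun z => ¬ z.im ≠ 0)) = ZR p := by
    rw [roots_map_filter p hp, Multiset.card_map]; rfl
  rw [hreal] at hcard
  have h2 : ZC p + ZR p = p.natDegree := hcard
  omega

lemma ZR_le (p : Polynomial ℝ) : ZR p ≤ p.natDegree := by
  simpa [ZR] using (Polynomial.card_roots' p)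

lemma ZC_zero : ZC 0 = 0 := by simp [ZC]

lemma ZC_Bop (β : ℝ) (hβ : -1 < β) (q : Polynomial ℝ) : ZC (Bop β q) ≤ ZC q := by
  rcases eq_or_ne q 0 with rfl | hq
  · have : Bop β 0 = 0 := by simp [Bop]
    rw [this]
  · rw [ZC_eq _ (Bop_ne_zero β q hq), ZC_eq _ hq, Bop_natDegree β q hq]
    have h1 := ZR_Bop β hβ q hq
    have h2 := ZR_le q
    unfold ZR at *
    omega

lemma ZC_deriv (q : Polynomial ℝ) : ZC (derivative q) ≤ ZC q := by
  rcases eq_or_ne (derivative q) 0 with h | h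
  · rw [h, ZC_zero]; exact Nat.zero_le _
  · have hq : q ≠ 0 := fun h0 => h (by rw [h0]; simp)
    have hdegpos : 0 < q.natDegree := by
      rcases Nat.eq_zero_or_pos q.natDegree with h0 | h0
      · exfalso
        obtain ⟨c, rfl⟩ := Polynomial.natDegree_eq_zero.mp h0
        simp at h
      · exact h0
    have hdeg : (derivative q).natDegree = q.natDegree - 1 :=
      Polynomial.natDegree_eq_of_degree_eq_some (Polynomial.degree_derivative_eq q hdegpos)
    rw [ZC_eq _ h, ZC_eq _ hq, hdeg]
    have h1 := Polynomial.card_roots_le_derivative q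
    have h2 := ZR_le (derivative q)
    unfold ZR at *
    omega

lemma Bop_comm (β : ℝ) (r : Polynomial ℝ) :
    derivative (Bop β (derivative r)) =
      Bop (β + 1) (derivative (derivative r)) + derivative r := by
  unfold Bop
  simp only [derivative_add, derivative_mul, derivative_neg, derivative_X, derivative_sub,
    derivative_C, derivative_one, C_add, C_1]
  ring

lemma Bop_add (β : ℝ) (r₁ r₂ : Polynomial ℝ) :
    Bop β (r₁ + r₂) = Bop β r₁ + Bop β r₂ := by
  unfold Bop; rw [derivative_add]; ring

lemma Bop_C_mul (β : ℝ) (c : ℝ) (r : Polynomial ℝ) :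
    Bop β (C c * r) = C c * Bop β r := by
  unfold Bop; rw [derivative_C_mul]; ring

lemma Bop_sum (β : ℝ) {ι : Type*} (s : Finset ι) (f : ι → Polynomial ℝ) :
    Bop β (∑ i ∈ s, f i) = ∑ i ∈ s, Bop β (f i) := by
  unfold Bop
  rw [derivative_sum, Finset.mul_sum, Finset.mul_sum, ← Finset.sum_add_distrib]

section Eigen

variable (α : ℝ) (L : ℕ → Polynomial ℝ)
  (hde : ∀ n : ℕ, Bop α (derivative (L n)) = C (n : ℝ) * L n)

include hde

lemma eigen_iter (j s : ℕ) :
    Bop (α + s) (derivative (derivative^[s] (L j)))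
      = C ((j : ℝ) - s) * derivative^[s] (L j) := by
  induction s with
  | zero => simpa using hde j
  | succ s ih =>
      have h2 := congrArg derivative ih
      rw [Bop_comm, derivative_C_mul] at h2
      have h3 : Bop (α + s + 1) (derivative (derivative (derivative^[s] (L j))))
          = C ((j : ℝ) - s - 1) * derivative (derivative^[s] (L j)) := by
        have e : (C ((j:ℝ) - s - 1) : Polynomial ℝ) = C ((j:ℝ) - s) - 1 := by
          rw [C_sub, C_1]
        rw [e, sub_mul, one_mul, ← h2]
        ring
      rw [Function.iterate_succ_apply']
      have hcast : α + ((s + 1 : ℕ) : ℝ) = α + s + 1 := by push_cast; ring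
      have hcast2 : (j : ℝ) - ((s + 1 : ℕ) : ℝ) = (j : ℝ) - s - 1 := by push_cast; ring
      rw [hcast, hcast2]
      exact h3

lemma P1 (N s : ℕ) (c : ℕ → ℝ) :
    Bop (α + s) (∑ j ∈ Finset.range N, C (c j) * derivative^[s + 1] (L j))
      = ∑ j ∈ Finset.range N, C (((j : ℝ) - s) * c j) * derivative^[s] (L j) := by
  rw [Bop_sum]
  refine Finset.sum_congr rfl fun j _ => ?_
  rw [Bop_C_mul, Function.iterate_succ_apply', eigen_iter α L hde j s, C_mul]
  ring

end Eigen

lemma P2 (N s : ℕ) (L : ℕ → Polynomial ℝ) (c : ℕ → ℝ) :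
    derivative (∑ j ∈ Finset.range N, C (c j) * derivative^[s] (L j))
      = ∑ j ∈ Finset.range N, C (c j) * derivative^[s + 1] (L j) := by
  rw [derivative_sum]
  refine Finset.sum_congr rfl fun j _ => ?_
  rw [derivative_C_mul, Function.iterate_succ_apply']

theorem stmt16 (α : ℝ) (hα : -1 < α)
    (L : ℕ → Polynomial ℝ) (hdeg : ∀ n, (L n).degree = n)
    (hde : ∀ n, -X * derivative (derivative (L n)) + (X - C (α + 1)) * derivative (L n)
        = C (n : ℝ) * L n)
    (w : ℕ) (hw : 1 ≤ w) (m : ℕ → ℕ) (hm : ∀ k < w, 1 ≤ m k)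
    (n : ℕ) (a : ℕ → ℝ) :
    ZC (∑ j ∈ Finset.range (n + 1),
          C ((∏ k ∈ Finset.range w, ((j : ℝ) - (k : ℝ)) ^ m k) * a j) * L j)
      ≤ ZC (∑ j ∈ Finset.range (n + 1), C (a j) * L j) := by
  have hde' : ∀ n : ℕ, Bop α (derivative (L n)) = C (n : ℝ) * L n := by
    intro n; simp only [Bop]; exact hde n
  set N := n + 1 with hN
  set cdown : ℕ → ℕ → ℝ :=
    fun s j => (∏ k ∈ Finset.range s, ((j:ℝ) - k) ^ (m k - 1)) * a j with hcdown
  set Q : ℕ → Polynomial ℝ :=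
    fun s => ∑ j ∈ Finset.range N, C (cdown s j) * derivative^[s] (L j) with hQ
  -- inner power lemma
  have hpow : ∀ (s t : ℕ) (c : ℕ → ℝ),
      ZC (∑ j ∈ Finset.range N, C (((j:ℝ) - s) ^ t * c j) * derivative^[s] (L j))
        ≤ ZC (∑ j ∈ Finset.range N, C (c j) * derivative^[s] (L j)) := by
    intro s t
    induction t with
    | zero => intro c; simp
    | succ t ih =>
        intro c
        have hrw : (∑ j ∈ Finset.range N, C (((j:ℝ) - s) ^ (t+1) * c j) * derivative^[s] (L j))
            = Bop (α + s) (derivative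
                (∑ j ∈ Finset.range N, C (((j:ℝ) - s) ^ t * c j) * derivative^[s] (L j))) := by
          rw [P2, P1 α L hde']
          refine Finset.sum_congr rfl fun j _ => ?_
          congr 1
          rw [pow_succ]
          ring
        calc ZC (∑ j ∈ Finset.range N, C (((j:ℝ) - s) ^ (t+1) * c j) * derivative^[s] (L j))
            = ZC (Bop (α + s) (derivative
                (∑ j ∈ Finset.range N, C (((j:ℝ) - s) ^ t * c j) * derivative^[s] (L j)))) := by
              rw [hrw]
          _ ≤ ZC (derivative
                (∑ j ∈ Finset.range N, C (((j:ℝ) - s) ^ t * c j) * derivative^[s] (L j))) :=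
              ZC_Bop _ (by have : (0:ℝ) ≤ (s:ℝ) := Nat.cast_nonneg s; linarith) _
          _ ≤ ZC (∑ j ∈ Finset.range N, C (((j:ℝ) - s) ^ t * c j) * derivative^[s] (L j)) :=
              ZC_deriv _
          _ ≤ _ := ih c
  -- down phase
  have hdown : ∀ s, s ≤ w → ZC (Q s) ≤ ZC (Q 0) := by
    intro s
    induction s with
    | zero => intro _; exact le_refl _
    | succ s ih =>
        intro hsw
        have hs : s ≤ w := Nat.le_of_succ_le hsw
        have hQrw : Q (s+1) = derivative (∑ j ∈ Finset.range N,
            C (((j:ℝ) - s) ^ (m s - 1) * cdown s j) * derivative^[s] (L j)) := by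
          rw [P2]
          refine Finset.sum_congr rfl fun j _ => ?_
          congr 1
          simp only [hcdown]
          rw [Finset.prod_range_succ]
          congr 1
          ring
        calc ZC (Q (s+1)) ≤ ZC (∑ j ∈ Finset.range N,
              C (((j:ℝ) - s) ^ (m s - 1) * cdown s j) * derivative^[s] (L j)) := by
              rw [hQrw]; exact ZC_deriv _
          _ ≤ ZC (∑ j ∈ Finset.range N, C (cdown s j) * derivative^[s] (L j)) :=
              hpow s (m s - 1) (cdown s)
          _ ≤ ZC (Q 0) := ih hs
  -- up phase
  set cup : ℕ → ℕ → ℝ := fun s j =>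
    (∏ k ∈ Finset.range w, ((j:ℝ) - k) ^ (m k - 1)) *
      ((∏ k ∈ Finset.Ico s w, ((j:ℝ) - k)) * a j) with hcup
  set R : ℕ → Polynomial ℝ :=
    fun s => ∑ j ∈ Finset.range N, C (cup s j) * derivative^[s] (L j) with hR
  have hupstep : ∀ s, s < w → R s = Bop (α + s) (R (s + 1)) := by
    intro s hsw
    rw [hR]
    simp only
    rw [P1 α L hde']
    refine Finset.sum_congr rfl fun j _ => ?_
    congr 1
    simp only [hcup]
    rw [Finset.prod_eq_prod_Ico_succ_bot hsw]
    congr 1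
    ring
  have hup : ∀ s, s ≤ w → ZC (R 0) ≤ ZC (R s) := by
    intro s
    induction s with
    | zero => intro _; exact le_refl _
    | succ s ih =>
        intro hsw
        have hs : s < w := hsw
        calc ZC (R 0) ≤ ZC (R s) := ih (Nat.le_of_lt hs)
          _ = ZC (Bop (α + s) (R (s+1))) := by rw [hupstep s hs]
          _ ≤ ZC (R (s+1)) :=
              ZC_Bop _ (by have : (0:ℝ) ≤ (s:ℝ) := Nat.cast_nonneg s; linarith) _
  -- connections
  have hRQ : R w = Q w := by
    rw [hR, hQ]
    refine Finset.sum_congr rfl fun j _ => ?_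
    congr 1
    simp [hcup, hcdown]
  have htarget : (∑ j ∈ Finset.range (n + 1),
      C ((∏ k ∈ Finset.range w, ((j : ℝ) - (k : ℝ)) ^ m k) * a j) * L j) = R 0 := by
    rw [hR]
    simp only [Function.iterate_zero, id_eq]
    refine Finset.sum_congr rfl fun j _ => ?_
    have harg : (∏ k ∈ Finset.range w, ((j:ℝ) - (k:ℝ)) ^ m k) * a j = cup 0 j := by
      simp only [hcup]
      rw [show Finset.Ico 0 w = Finset.range w from (Finset.range_eq_Ico w).symm,
        ← mul_assoc, ← Finset.prod_mul_distrib]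
      congr 1
      refine Finset.prod_congr rfl fun k hk => ?_
      have hk' : 1 ≤ m k := hm k (Finset.mem_range.mp hk)
      rw [← pow_succ]
      congr 1
      omega
    rw [harg]
  have hp0 : (∑ j ∈ Finset.range (n + 1), C (a j) * L j) = Q 0 := by
    refine Finset.sum_congr rfl fun j _ => ?_
    simp [hcdown]
  rw [htarget, hp0]
  calc ZC (R 0) ≤ ZC (R w) := hup w (le_refl w)
    _ = ZC (Q w) := by rw [hRQ]
    _ ≤ ZC (Q 0) := hdown w (le_refl w)
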